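/- For all integers α ≥ 2 and real p ≥ 1, the function f₂(p) = (α-1)·ln((p+α)/α) + ln(p/α) - α·ln((p+α-1)/α) is strictly negative. -/

import Mathlib

/-- For all integers `α ≥ 2` and real `p ≥ 1`,
`(α-1)·ln((p+α)/α) + ln(p/α) - α·ln((p+α-1)/α) < 0`. -/
theorem f2_neg (α : ℕ) (hα : 2 ≤ α) (p : ℝ) (hp : 1 ≤ p) :
    ((α : ℝ) - 1) * Real.log ((p + α) / α) + Real.log (p / α)
      - (α : ℝ) * Real.log ((p + α - 1) / α) < 0 := by
  have hα2 : (2 : ℝ) ≤ (α : ℝ) := by exact_mod_cast hα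
  have hαpos : (0 : ℝ) < α := by linarith
  have hppos : (0 : ℝ) < p := by linarith
  have hx : p + (α : ℝ) ∈ Set.Ioi (0 : ℝ) := Set.mem_Ioi.2 (by linarith)
  have hy : p ∈ Set.Ioi (0 : ℝ) := hppos
  have hne : p + (α : ℝ) ≠ p := by intro h; nlinarith
  have ha : (0 : ℝ) < ((α : ℝ) - 1) / α := div_pos (by linarith) hαpos
  have hb : (0 : ℝ) < 1 / (α : ℝ) := by positivity
  have hab : ((α : ℝ) - 1) / α + 1 / α = 1 := by field_simp; ring
  have key := strictConcaveOn_log_Ioi.2 hx hy hne ha hb hab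
  simp only [smul_eq_mul] at key
  have hmid : ((α : ℝ) - 1) / α * (p + α) + 1 / α * p = p + α - 1 := by
    field_simp; ring
  rw [hmid] at key
  have hzpos : (0 : ℝ) < p + α - 1 := by linarith
  rw [Real.log_div (by linarith) (by linarith), Real.log_div (by linarith) (by linarith),
    Real.log_div (by linarith) (by linarith)]
  have e : ((α : ℝ) - 1) * Real.log (p + α) + Real.log p
      = α * (((α : ℝ) - 1) / α * Real.log (p + α) + 1 / α * Real.log p) := by
    field_simp
  have key2 : ((α : ℝ) - 1) * Real.log (p + α) + Real.log p
      < (α : ℝ) * Real.log (p + α - 1) := by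
    rw [e]; exact mul_lt_mul_of_pos_left key hαpos
  linarith
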